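/- Let C = {x, z} ∪ J be a partition of the set of alternatives of an election with voting profile V such that z ≥_{3/4} x and x ≥_{3/4} y for all y ∈ J. Then for every partition J = A ∪ B into pairwise disjoint linearly ordered sets with A nonempty, d³(A z x B, V) > d³(z x A B, V). -/

import Mathlib

open Finset

variable {α : Type}

/-- A ranking of the alternatives: a duplicate-free list containing every
alternative; earlier in the list means more preferred. -/
def IsRanking (l : List α) : Prop := l.Nodup ∧ ∀ a : α, a ∈ l

/-- The 3-wise Kendall tau distance between two rankings: the number of subsets
`S` with `|S| ≤ 3` on which the two rankings have different top elements. -/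
def d3 [Fintype α] [DecidableEq α] (l m : List α) : ℕ :=
  ((Finset.univ : Finset α).powerset.filter
    (fun S => S.card ≤ 3 ∧ ∃ a ∈ S, ∃ b ∈ S, a ≠ b ∧
      (∀ c ∈ S, l.idxOf a ≤ l.idxOf c) ∧ (∀ c ∈ S, m.idxOf b ≤ m.idxOf c))).card

/-- Total 3-wise Kendall tau distance from a ranking to a voting profile. -/
def d3V [Fintype α] [DecidableEq α] (l : List α) (V : Multiset (List α)) : ℕ :=
  (V.map (fun v => d3 l v)).sum

/-- A 3-wise median of the voting profile `V`. -/
def IsMedian3 [Fintype α] [DecidableEq α] (V : Multiset (List α)) (l : List α) : Prop :=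
  IsRanking l ∧ ∀ m : List α, IsRanking m → d3V l V ≤ d3V m V

/-- The 2-wise Kendall tau distance between two rankings: the number of
two-element subsets on which the relative orders differ. -/
def d2 [Fintype α] [DecidableEq α] (l m : List α) : ℕ :=
  ((Finset.univ : Finset α).powerset.filter
    (fun S => S.card = 2 ∧ ∃ a ∈ S, ∃ b ∈ S,
      l.idxOf a < l.idxOf b ∧ m.idxOf b < m.idxOf a)).card

/-- Total 2-wise Kendall tau distance from a ranking to a voting profile. -/
def d2V [Fintype α] [DecidableEq α] (l : List α) (V : Multiset (List α)) : ℕ :=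
  (V.map (fun v => d2 l v)).sum

/-- A 2-wise median of the voting profile `V`. -/
def IsMedian2 [Fintype α] [DecidableEq α] (V : Multiset (List α)) (l : List α) : Prop :=
  IsRanking l ∧ ∀ m : List α, IsRanking m → d2V l V ≤ d2V m V

/-- `x ≥ₛ y`: `x` is ranked before `y` in at least `s·|V|` votes. -/
def geq [DecidableEq α] (V : Multiset (List α)) (s : ℝ) (x y : α) : Prop :=
  s * (V.card : ℝ) ≤ (V.countP (fun v => v.idxOf x < v.idxOf y) : ℝ)

/-- `x` is a non-dirty alternative with respect to the threshold `s`. -/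
def NonDirty [DecidableEq α] (V : Multiset (List α)) (s : ℝ) (x : α) : Prop :=
  ∀ y : α, y ≠ x → geq V s x y ∨ geq V s y x

/-- The election satisfies the `3/4`-majority rule with respect to the 3-wise
Kemeny voting scheme. -/
def Satisfies34 [Fintype α] [DecidableEq α] (V : Multiset (List α)) : Prop :=
  ∀ x : α, NonDirty V (3/4) x → ∀ y : α, y ≠ x →
    (geq V (3/4) x y → ∀ π : List α, IsMedian3 V π → π.idxOf x < π.idxOf y) ∧
    (geq V (3/4) y x → ∀ π : List α, IsMedian3 V π → π.idxOf y < π.idxOf x)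

/-- `n_{xy}`: the number of votes ranking `x` before `y`. -/
def nn2 [DecidableEq α] (V : Multiset (List α)) (x y : α) : ℕ :=
  V.countP (fun v => v.idxOf x < v.idxOf y)

/-- `n_{xyz}`: the number of votes ranking `x` before `y` before `z`. -/
def nn3 [DecidableEq α] (V : Multiset (List α)) (x y z : α) : ℕ :=
  V.countP (fun v => v.idxOf x < v.idxOf y ∧ v.idxOf y < v.idxOf z)

/-- `n_{xyzt}`: the number of votes ranking `x` before `y` before `z` before `t`. -/
def nn4 [DecidableEq α] (V : Multiset (List α)) (x y z t : α) : ℕ :=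
  V.countP (fun v => v.idxOf x < v.idxOf y ∧ v.idxOf y < v.idxOf z ∧
    v.idxOf z < v.idxOf t)

/-- `δ_{xy} = n_{xy} - n_{yx}`. -/
def del [DecidableEq α] (V : Multiset (List α)) (x y : α) : ℤ :=
  (nn2 V x y : ℤ) - nn2 V y x

/-- `P_{x,y,z}`. -/
def Pq [DecidableEq α] (V : Multiset (List α)) (x y z : α) : ℤ :=
  3 * (nn3 V x z y : ℤ) + nn3 V x y z + nn3 V z x y + nn3 V z y x
    - 4 * nn3 V y z x - 2 * nn3 V y x z

/-- `Q_{x,y,z}`. -/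
def Qq [DecidableEq α] (V : Multiset (List α)) (x y z : α) : ℤ :=
  (nn3 V x y z : ℤ) + nn3 V x z y - nn3 V y x z - nn3 V y z x

/-- `R_{y,x,z,t}`. -/
def Rr [DecidableEq α] (V : Multiset (List α)) (y x z t : α) : ℤ :=
  2 * (nn4 V y z t x : ℤ) + 2 * nn4 V y z x t + nn4 V y t z x + nn4 V y t x z

/-- `S_{y,x,z,t} = R_{y,x,z,t} - R_{x,y,z,t}`. -/
def Ss [DecidableEq α] (V : Multiset (List α)) (y x z t : α) : ℤ :=
  Rr V y x z t - Rr V x y z t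

section AuxLemmas

lemma my_countP_mono {β : Type} (V : Multiset β) (p q : β → Prop)
    [DecidablePred p] [DecidablePred q]
    (h : ∀ v ∈ V, p v → q v) : V.countP p ≤ V.countP q := by
  induction V using Multiset.induction with
  | empty => simp
  | cons a s ih =>
    have ha := h a (Multiset.mem_cons_self a s)
    have := ih (fun v hv => h v (Multiset.mem_cons_of_mem hv))
    simp only [Multiset.countP_cons]
    split_ifs with h1 h2
    · omega
    · exact absurd (ha h1) h2
    · omega
    · omega

lemma my_countP_or {β : Type} (V : Multiset β) (p q : β → Prop)
    [DecidablePred p] [DecidablePred q] :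
    V.countP (fun v => p v ∨ q v) ≤ V.countP p + V.countP q := by
  induction V using Multiset.induction with
  | empty => simp
  | cons a s ih =>
    simp only [Multiset.countP_cons]
    have hite : (if p a ∨ q a then 1 else 0) ≤
        ((if p a then 1 else 0) + (if q a then 1 else 0) : ℕ) := by
      by_cases h1 : p a <;> by_cases h2 : q a <;> simp [h1, h2]
    omega

def istop [DecidableEq α] (v : List α) (S : Finset α) (t : α) : Prop :=
  t ∈ S ∧ ∀ c ∈ S, v.idxOf t ≤ v.idxOf c

instance [DecidableEq α] (v : List α) (S : Finset α) (t : α) : Decidable (istop v S t) := by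
  unfold istop; infer_instance

lemma istop_unique [DecidableEq α] {v : List α} (hv : IsRanking v) {S : Finset α} {a b : α}
    (ha : istop v S a) (hb : istop v S b) : a = b := by
  have h1 := ha.2 b hb.1
  have h2 := hb.2 a ha.1
  exact (List.idxOf_inj (hv.2 a)).1 (le_antisymm h1 h2)

lemma istop_exists [DecidableEq α] (v : List α) {S : Finset α} (hS : S.Nonempty) :
    ∃ t, istop v S t := by
  obtain ⟨b, hb, h⟩ := S.exists_min_image (fun c => v.idxOf c) hS
  exact ⟨b, hb, h⟩

def Qp [DecidableEq α] (l v : List α) (S : Finset α) : Prop :=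
  ∃ a ∈ S, ∃ b ∈ S, a ≠ b ∧
    (∀ c ∈ S, l.idxOf a ≤ l.idxOf c) ∧ (∀ c ∈ S, v.idxOf b ≤ v.idxOf c)

instance [DecidableEq α] (l v : List α) (S : Finset α) : Decidable (Qp l v S) := by
  unfold Qp; infer_instance

lemma Qp_iff [DecidableEq α] {l v : List α} (hl : IsRanking l) (hv : IsRanking v)
    {S : Finset α} {t : α} (ht : istop l S t) : Qp l v S ↔ ¬ istop v S t := by
  constructor
  · rintro ⟨a, ha, b, hb, hab, hla, hvb⟩ hvt
    have h1 : a = t := istop_unique hl ⟨ha, hla⟩ ht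
    have h2 : b = t := istop_unique hv ⟨hb, hvb⟩ hvt
    exact hab (h1.trans h2.symm)
  · intro hnt
    obtain ⟨b, hb⟩ := istop_exists v ⟨t, ht.1⟩
    refine ⟨t, ht.1, b, hb.1, ?_, ht.2, hb.2⟩
    rintro rfl
    exact hnt hb

end AuxLemmas

section Keys
variable [DecidableEq α]

lemma not_istop_pair (v : List α) (u w : α) :
    (¬ istop v {u, w} u) ↔ v.idxOf w < v.idxOf u := by
  simp only [istop, Finset.mem_insert, Finset.mem_singleton, true_or, true_and, not_forall]
  constructor
  · rintro ⟨c, hc, h⟩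
    rcases hc with rfl | rfl <;> omega
  · intro h
    exact ⟨w, Or.inr rfl, by omega⟩

lemma key2 (V : Multiset (List α)) (hV : ∀ v ∈ V, IsRanking v)
    (hn : 0 < Multiset.card V) (x z a : α) (hax : a ≠ x) (haz : a ≠ z)
    (hm0 : 4 * V.countP (fun v => ¬ v.idxOf z < v.idxOf x) ≤ Multiset.card V)
    (hma : 4 * V.countP (fun v => ¬ v.idxOf x < v.idxOf a) ≤ Multiset.card V) :
    V.countP (fun v => ¬ istop v {z,a} z) + V.countP (fun v => ¬ istop v {x,a} x) <
      V.countP (fun v => ¬ istop v {z,a} a) + V.countP (fun v => ¬ istop v {x,a} a) := by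
  have e1 : V.countP (fun v => ¬ istop v ({z,a} : Finset α) z)
      = V.countP (fun v => v.idxOf a < v.idxOf z) :=
    Multiset.countP_congr rfl (fun v _ => by rw [eq_iff_iff, not_istop_pair])
  have e2 : V.countP (fun v => ¬ istop v ({x,a} : Finset α) x)
      = V.countP (fun v => v.idxOf a < v.idxOf x) :=
    Multiset.countP_congr rfl (fun v _ => by rw [eq_iff_iff, not_istop_pair])
  have e3 : V.countP (fun v => ¬ istop v ({z,a} : Finset α) a)
      = V.countP (fun v => v.idxOf z < v.idxOf a) :=
    Multiset.countP_congr rfl (fun v _ => by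
      rw [eq_iff_iff, Finset.pair_comm z a, not_istop_pair])
  have e4 : V.countP (fun v => ¬ istop v ({x,a} : Finset α) a)
      = V.countP (fun v => v.idxOf x < v.idxOf a) :=
    Multiset.countP_congr rfl (fun v _ => by
      rw [eq_iff_iff, Finset.pair_comm x a, not_istop_pair])
  rw [e1, e2, e3, e4]
  have s1 : V.countP (fun v => v.idxOf a < v.idxOf z)
      + V.countP (fun v => v.idxOf z < v.idxOf a) = Multiset.card V := by
    have h0 := Multiset.card_eq_countP_add_countP
      (fun v : List α => v.idxOf a < v.idxOf z) V
    have h2 : V.countP (fun v => ¬ v.idxOf a < v.idxOf z)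
        = V.countP (fun v => v.idxOf z < v.idxOf a) :=
      Multiset.countP_congr rfl (fun v hv => by
        have hne : v.idxOf a ≠ v.idxOf z := fun h =>
          haz ((List.idxOf_inj ((hV v hv).2 a)).1 h)
        rw [eq_iff_iff]; omega)
    omega
  have s2 : V.countP (fun v => v.idxOf a < v.idxOf x)
      + V.countP (fun v => v.idxOf x < v.idxOf a) = Multiset.card V := by
    have h0 := Multiset.card_eq_countP_add_countP
      (fun v : List α => v.idxOf a < v.idxOf x) V
    have h2 : V.countP (fun v => ¬ v.idxOf a < v.idxOf x)
        = V.countP (fun v => v.idxOf x < v.idxOf a) :=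
      Multiset.countP_congr rfl (fun v hv => by
        have hne : v.idxOf a ≠ v.idxOf x := fun h =>
          hax ((List.idxOf_inj ((hV v hv).2 a)).1 h)
        rw [eq_iff_iff]; omega)
    omega
  have b1 : V.countP (fun v => v.idxOf a < v.idxOf z)
      ≤ V.countP (fun v => ¬ v.idxOf z < v.idxOf x)
        + V.countP (fun v => ¬ v.idxOf x < v.idxOf a) :=
    le_trans (my_countP_mono _ _ _ (fun v _ h => by
        by_contra hc; push_neg at hc; omega))
      (my_countP_or _ _ _)
  have b2 : V.countP (fun v => v.idxOf a < v.idxOf x)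
      ≤ V.countP (fun v => ¬ v.idxOf x < v.idxOf a) :=
    my_countP_mono _ _ _ (fun v _ h => by omega)
  omega

lemma key3 (V : Multiset (List α)) (hV : ∀ v ∈ V, IsRanking v)
    (x z a b : α) (hax : a ≠ x) (haz : a ≠ z) (hbx : b ≠ x) (hbz : b ≠ z)
    (hm0 : 4 * V.countP (fun v => ¬ v.idxOf z < v.idxOf x) ≤ Multiset.card V)
    (hma : 4 * V.countP (fun v => ¬ v.idxOf x < v.idxOf a) ≤ Multiset.card V)
    (hmb : 4 * V.countP (fun v => ¬ v.idxOf x < v.idxOf b) ≤ Multiset.card V) :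
    V.countP (fun v => ¬ istop v {z,a,b} z) + V.countP (fun v => ¬ istop v {x,a,b} x) ≤
      V.countP (fun v => ¬ istop v {z,a,b} a) + V.countP (fun v => ¬ istop v {x,a,b} a) := by
  have b1 : V.countP (fun v => ¬ istop v ({z,a,b} : Finset α) z)
      ≤ V.countP (fun v => ¬ v.idxOf z < v.idxOf x)
        + (V.countP (fun v => ¬ v.idxOf x < v.idxOf a)
          + V.countP (fun v => ¬ v.idxOf x < v.idxOf b)) := by
    refine le_trans (my_countP_mono _ _
      (fun v => (¬ v.idxOf z < v.idxOf x) ∨ ((¬ v.idxOf x < v.idxOf a)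
        ∨ (¬ v.idxOf x < v.idxOf b))) (fun v _ h => ?_))
      (le_trans (my_countP_or _ _ _) (by
        have := my_countP_or V (fun v => ¬ v.idxOf x < v.idxOf a)
          (fun v => ¬ v.idxOf x < v.idxOf b)
        omega))
    by_contra hc
    push_neg at hc
    exact h ⟨by simp, fun c hcm => by
      simp only [Finset.mem_insert, Finset.mem_singleton] at hcm
      rcases hcm with rfl | rfl | rfl <;> omega⟩
  have b2 : V.countP (fun v => ¬ istop v ({x,a,b} : Finset α) x)
      ≤ V.countP (fun v => ¬ v.idxOf x < v.idxOf a)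
        + V.countP (fun v => ¬ v.idxOf x < v.idxOf b) := by
    refine le_trans (my_countP_mono _ _
      (fun v => (¬ v.idxOf x < v.idxOf a) ∨ (¬ v.idxOf x < v.idxOf b))
      (fun v _ h => ?_)) (my_countP_or _ _ _)
    by_contra hc
    push_neg at hc
    exact h ⟨by simp, fun c hcm => by
      simp only [Finset.mem_insert, Finset.mem_singleton] at hcm
      rcases hcm with rfl | rfl | rfl <;> omega⟩
  have u2 : V.countP (fun v => istop v ({z,a,b} : Finset α) a)
      ≤ V.countP (fun v => ¬ v.idxOf z < v.idxOf x)
        + V.countP (fun v => ¬ v.idxOf x < v.idxOf a) := by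
    refine le_trans (my_countP_mono _ _
      (fun v => (¬ v.idxOf z < v.idxOf x) ∨ (¬ v.idxOf x < v.idxOf a))
      (fun v _ h => ?_)) (my_countP_or _ _ _)
    have hz := h.2 z (by simp)
    by_contra hc
    push_neg at hc
    omega
  have u2' : V.countP (fun v => istop v ({x,a,b} : Finset α) a)
      ≤ V.countP (fun v => ¬ v.idxOf x < v.idxOf a) := by
    refine my_countP_mono _ _ _ (fun v _ h => ?_)
    have hx2 := h.2 x (by simp)
    omega
  have s1 := Multiset.card_eq_countP_add_countP
    (fun v : List α => istop v ({z,a,b} : Finset α) a) V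
  have s2 := Multiset.card_eq_countP_add_countP
    (fun v : List α => istop v ({x,a,b} : Finset α) a) V
  omega

lemma keyT (V : Multiset (List α)) (hV : ∀ v ∈ V, IsRanking v)
    (x z a : α) (hax : a ≠ x) (haz : a ≠ z)
    (hm0 : 4 * V.countP (fun v => ¬ v.idxOf z < v.idxOf x) ≤ Multiset.card V)
    (hma : 4 * V.countP (fun v => ¬ v.idxOf x < v.idxOf a) ≤ Multiset.card V) :
    V.countP (fun v => ¬ istop v {z,x,a} z) ≤ V.countP (fun v => ¬ istop v {z,x,a} a) := by
  have b1 : V.countP (fun v => ¬ istop v ({z,x,a} : Finset α) z)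
      ≤ V.countP (fun v => ¬ v.idxOf z < v.idxOf x)
        + V.countP (fun v => ¬ v.idxOf x < v.idxOf a) := by
    refine le_trans (my_countP_mono _ _
      (fun v => (¬ v.idxOf z < v.idxOf x) ∨ (¬ v.idxOf x < v.idxOf a))
      (fun v _ h => ?_)) (my_countP_or _ _ _)
    by_contra hc
    push_neg at hc
    exact h ⟨by simp, fun c hcm => by
      simp only [Finset.mem_insert, Finset.mem_singleton] at hcm
      rcases hcm with rfl | rfl | rfl <;> omega⟩
  have u2 : V.countP (fun v => istop v ({z,x,a} : Finset α) a)
      ≤ V.countP (fun v => ¬ v.idxOf x < v.idxOf a) := by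
    refine my_countP_mono _ _ _ (fun v _ h => ?_)
    have hx2 := h.2 x (by simp)
    omega
  have s1 := Multiset.card_eq_countP_add_countP
    (fun v : List α => istop v ({z,x,a} : Finset α) a) V
  omega

end Keys

section D3V
variable [Fintype α] [DecidableEq α]

lemma d3_eq (l v : List α) :
    d3 l v = ∑ S ∈ (Finset.univ : Finset α).powerset.filter (fun S => S.card ≤ 3),
      if Qp l v S then 1 else 0 := by
  have h : ((Finset.univ : Finset α).powerset.filter
      (fun S => S.card ≤ 3 ∧ ∃ a ∈ S, ∃ b ∈ S, a ≠ b ∧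
        (∀ c ∈ S, l.idxOf a ≤ l.idxOf c) ∧ (∀ c ∈ S, v.idxOf b ≤ v.idxOf c)))
      = ((Finset.univ : Finset α).powerset.filter (fun S => S.card ≤ 3)).filter
        (fun S => Qp l v S) := by
    ext S
    simp [Qp, and_assoc]
  rw [d3, h, Finset.card_filter]

lemma d3V_eq (l : List α) (V : Multiset (List α)) :
    d3V l V = ∑ S ∈ (Finset.univ : Finset α).powerset.filter (fun S => S.card ≤ 3),
      V.countP (fun v => Qp l v S) := by
  induction V using Multiset.induction with
  | empty => simp [d3V]
  | cons v V ih =>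
    have : d3V l (v ::ₘ V) = d3 l v + d3V l V := by
      simp [d3V]
    rw [this, ih, d3_eq]
    rw [← Finset.sum_add_distrib]
    refine Finset.sum_congr rfl (fun S _ => ?_)
    rw [Multiset.countP_cons]
    split_ifs <;> omega

end D3V

section Bridge
variable [DecidableEq α]

lemma gg_eq (V : Multiset (List α)) (hV : ∀ v ∈ V, IsRanking v)
    {l : List α} (hl : IsRanking l) {S : Finset α} {t : α} (ht : istop l S t) :
    V.countP (fun v => Qp l v S) = V.countP (fun v => ¬ istop v S t) :=
  Multiset.countP_congr rfl (fun v hv => propext (Qp_iff hl (hV v hv) ht))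

lemma Qp_order_congr {l l' v : List α} {S : Finset α}
    (h : ∀ a ∈ S, ∀ c ∈ S, (l.idxOf a ≤ l.idxOf c ↔ l'.idxOf a ≤ l'.idxOf c)) :
    Qp l v S ↔ Qp l' v S := by
  constructor
  · rintro ⟨a, ha, b, hb, hab, hla, hvb⟩
    exact ⟨a, ha, b, hb, hab, fun c hc => (h a ha c hc).1 (hla c hc), hvb⟩
  · rintro ⟨a, ha, b, hb, hab, hla, hvb⟩
    exact ⟨a, ha, b, hb, hab, fun c hc => (h a ha c hc).2 (hla c hc), hvb⟩

lemma geq_to_count (V : Multiset (List α)) {u w : α} (h : geq V (3/4) u w) :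
    4 * V.countP (fun v => ¬ v.idxOf u < v.idxOf w) ≤ Multiset.card V := by
  rw [geq] at h
  have hsum := Multiset.card_eq_countP_add_countP
    (fun v : List α => v.idxOf u < v.idxOf w) V
  have h4 : (3 : ℝ) * (Multiset.card V : ℝ)
      ≤ 4 * (V.countP (fun v => v.idxOf u < v.idxOf w) : ℝ) := by linarith
  have h5 : 3 * Multiset.card V ≤ 4 * V.countP (fun v => v.idxOf u < v.idxOf w) := by
    exact_mod_cast h4
  omega

end Bridge

def relS [DecidableEq α] (z x : α) (A : List α) (S : Finset α) : Prop :=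
  (z ∈ S ∨ x ∈ S) ∧ ∃ a ∈ S, a ∈ A

instance [DecidableEq α] (z x : α) (A : List α) (S : Finset α) :
    Decidable (relS z x A S) := by unfold relS; infer_instance

section Assemble
variable [DecidableEq α] [Fintype α]

lemma assemble (z x : α) (A : List α) (hzx : z ≠ x) (hzA : z ∉ A) (hxA : x ∉ A)
    (g1 g2 : Finset α → ℕ)
    (hrest : ∀ S : Finset α, S.card ≤ 3 →
      ¬ ((z ∈ S ∨ x ∈ S) ∧ ∃ a ∈ S, a ∈ A) → g1 S = g2 S)
    (hT : ∀ S : Finset α, S.card ≤ 3 → z ∈ S → x ∈ S → (∃ a ∈ S, a ∈ A) → g1 S ≤ g2 S)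
    (hD : ∀ S : Finset α, S.card ≤ 3 → z ∈ S → x ∉ S → (∃ a ∈ S, a ∈ A) →
      g1 S + g1 (insert x (S.erase z)) ≤ g2 S + g2 (insert x (S.erase z)))
    (a0 : α) (ha0 : a0 ∈ A)
    (hstrict : g1 {z, a0} + g1 {x, a0} < g2 {z, a0} + g2 {x, a0}) :
    ∑ S ∈ (Finset.univ : Finset α).powerset.filter (fun S => S.card ≤ 3), g1 S <
    ∑ S ∈ (Finset.univ : Finset α).powerset.filter (fun S => S.card ≤ 3), g2 S := by
  have ha0z : a0 ≠ z := fun h => hzA (h ▸ ha0)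
  have ha0x : a0 ≠ x := fun h => hxA (h ▸ ha0)
  set P3 := (Finset.univ : Finset α).powerset.filter (fun S => S.card ≤ 3) with hP3
  have hmemT : ∀ S : Finset α,
      S ∈ ((P3.filter (relS z x A)).filter (fun S => z ∈ S)).filter (fun S => x ∈ S)
      ↔ (S.card ≤ 3 ∧ relS z x A S ∧ z ∈ S ∧ x ∈ S) := fun S => by
    have := Finset.subset_univ S
    simp only [hP3, Finset.mem_filter, Finset.mem_powerset]
    tauto
  have hmemD : ∀ S : Finset α,
      S ∈ ((P3.filter (relS z x A)).filter (fun S => z ∈ S)).filter (fun S => ¬ x ∈ S)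
      ↔ (S.card ≤ 3 ∧ relS z x A S ∧ z ∈ S ∧ ¬ x ∈ S) := fun S => by
    have := Finset.subset_univ S
    simp only [hP3, Finset.mem_filter, Finset.mem_powerset]
    tauto
  have hmemX : ∀ S : Finset α,
      S ∈ (P3.filter (relS z x A)).filter (fun S => ¬ z ∈ S)
      ↔ (S.card ≤ 3 ∧ relS z x A S ∧ ¬ z ∈ S) := fun S => by
    have := Finset.subset_univ S
    simp only [hP3, Finset.mem_filter, Finset.mem_powerset]
    tauto
  have hmemR : ∀ S : Finset α,
      S ∈ P3.filter (fun S => ¬ relS z x A S)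
      ↔ (S.card ≤ 3 ∧ ¬ relS z x A S) := fun S => by
    have := Finset.subset_univ S
    simp only [hP3, Finset.mem_filter, Finset.mem_powerset]
    tauto
  have hsplit : ∀ g : Finset α → ℕ, ∑ S ∈ P3, g S =
      ∑ S ∈ ((P3.filter (relS z x A)).filter (fun S => z ∈ S)).filter (fun S => x ∈ S), g S
      + ∑ S ∈ ((P3.filter (relS z x A)).filter (fun S => z ∈ S)).filter (fun S => ¬ x ∈ S), g S
      + ∑ S ∈ (P3.filter (relS z x A)).filter (fun S => ¬ z ∈ S), g S
      + ∑ S ∈ P3.filter (fun S => ¬ relS z x A S), g S := by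
    intro g
    rw [← Finset.sum_filter_add_sum_filter_not P3 (relS z x A) g,
      ← Finset.sum_filter_add_sum_filter_not (P3.filter (relS z x A)) (fun S => z ∈ S) g,
      ← Finset.sum_filter_add_sum_filter_not ((P3.filter (relS z x A)).filter
        (fun S => z ∈ S)) (fun S => x ∈ S) g]
  have hRe : ∑ S ∈ P3.filter (fun S => ¬ relS z x A S), g1 S
      = ∑ S ∈ P3.filter (fun S => ¬ relS z x A S), g2 S := by
    refine Finset.sum_congr rfl (fun S hS => ?_)
    obtain ⟨hcard, hnr⟩ := (hmemR S).1 hS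
    exact hrest S hcard (fun h => hnr h)
  have hTe : ∑ S ∈ ((P3.filter (relS z x A)).filter (fun S => z ∈ S)).filter
        (fun S => x ∈ S), g1 S
      ≤ ∑ S ∈ ((P3.filter (relS z x A)).filter (fun S => z ∈ S)).filter
        (fun S => x ∈ S), g2 S := by
    refine Finset.sum_le_sum (fun S hS => ?_)
    obtain ⟨hcard, hrelS, hzS, hxS⟩ := (hmemT S).1 hS
    exact hT S hcard hzS hxS hrelS.2
  have hXD : ∀ g : Finset α → ℕ,
      ∑ S ∈ (P3.filter (relS z x A)).filter (fun S => ¬ z ∈ S), g S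
      = ∑ S ∈ ((P3.filter (relS z x A)).filter (fun S => z ∈ S)).filter (fun S => ¬ x ∈ S),
          g (insert x (S.erase z)) := by
    intro g
    refine Finset.sum_nbij' (fun S => insert z (S.erase x)) (fun S => insert x (S.erase z))
      ?_ ?_ ?_ ?_ ?_
    · -- maps X into D
      intro S hS
      obtain ⟨hcard, ⟨hor, a, haS, haA⟩, hzS⟩ := (hmemX S).1 hS
      have hxS : x ∈ S := by tauto
      have haz : a ≠ z := fun h => hzS (h ▸ haS)
      have hax : a ≠ x := fun h => hxA (h ▸ haA)
      have hcd : (insert z (S.erase x)).card = S.card := by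
        rw [Finset.card_insert_of_notMem
          (fun h => hzS (Finset.mem_of_mem_erase h)), Finset.card_erase_of_mem hxS]
        have : 0 < S.card := Finset.card_pos.2 ⟨x, hxS⟩
        omega
      refine (hmemD (insert z (S.erase x))).2 ⟨by omega, ⟨Or.inl (Finset.mem_insert_self _ _),
        a, Finset.mem_insert_of_mem (Finset.mem_erase.2 ⟨hax, haS⟩), haA⟩,
        Finset.mem_insert_self _ _, ?_⟩
      simp only [Finset.mem_insert]
      push_neg
      exact ⟨fun h => hzx h.symm, Finset.notMem_erase x S⟩
    · -- maps D into X
      intro S hS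
      obtain ⟨hcard, ⟨hor, a, haS, haA⟩, hzS, hxS⟩ := (hmemD S).1 hS
      have haz : a ≠ z := fun h => hzA (h ▸ haA)
      have hax : a ≠ x := fun h => hxA (h ▸ haA)
      have hcd : (insert x (S.erase z)).card = S.card := by
        rw [Finset.card_insert_of_notMem
          (fun h => hxS (Finset.mem_of_mem_erase h)), Finset.card_erase_of_mem hzS]
        have : 0 < S.card := Finset.card_pos.2 ⟨z, hzS⟩
        omega
      refine (hmemX (insert x (S.erase z))).2 ⟨by omega, ⟨Or.inr (Finset.mem_insert_self _ _),
        a, Finset.mem_insert_of_mem (Finset.mem_erase.2 ⟨haz, haS⟩), haA⟩, ?_⟩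
      simp only [Finset.mem_insert]
      push_neg
      exact ⟨hzx, Finset.notMem_erase z S⟩
    · -- left inverse
      intro S hS
      obtain ⟨hcard, ⟨hor, hwit⟩, hzS⟩ := (hmemX S).1 hS
      have hxS : x ∈ S := by tauto
      show insert x ((insert z (S.erase x)).erase z) = S
      rw [Finset.erase_insert (fun h => hzS (Finset.mem_of_mem_erase h)),
        Finset.insert_erase hxS]
    · -- right inverse
      intro S hS
      obtain ⟨hcard, hrel, hzS, hxS⟩ := (hmemD S).1 hS
      show insert z ((insert x (S.erase z)).erase x) = S
      rw [Finset.erase_insert (fun h => hxS (Finset.mem_of_mem_erase h)),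
        Finset.insert_erase hzS]
    · -- values
      intro S hS
      obtain ⟨hcard, ⟨hor, hwit⟩, hzS⟩ := (hmemX S).1 hS
      have hxS : x ∈ S := by tauto
      show g S = g (insert x ((insert z (S.erase x)).erase z))
      rw [Finset.erase_insert (fun h => hzS (Finset.mem_of_mem_erase h)),
        Finset.insert_erase hxS]
  have hDstar : ({z, a0} : Finset α) ∈
      ((P3.filter (relS z x A)).filter (fun S => z ∈ S)).filter (fun S => ¬ x ∈ S) := by
    refine (hmemD _).2 ⟨le_trans (Finset.card_insert_le _ _) (by simp),
      ⟨Or.inl (by simp), a0, by simp, ha0⟩, by simp, ?_⟩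
    simp only [Finset.mem_insert, Finset.mem_singleton]
    push_neg
    exact ⟨fun h => hzx h.symm, fun h => ha0x h.symm⟩
  have hDsum : ∑ S ∈ ((P3.filter (relS z x A)).filter (fun S => z ∈ S)).filter
        (fun S => ¬ x ∈ S), (g1 S + g1 (insert x (S.erase z)))
      < ∑ S ∈ ((P3.filter (relS z x A)).filter (fun S => z ∈ S)).filter
        (fun S => ¬ x ∈ S), (g2 S + g2 (insert x (S.erase z))) := by
    refine Finset.sum_lt_sum (fun S hS => ?_) ⟨{z, a0}, hDstar, ?_⟩
    · obtain ⟨hcard, hrelS, hzS, hxS⟩ := (hmemD S).1 hS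
      exact hD S hcard hzS hxS hrelS.2
    · have h1 : ({z, a0} : Finset α).erase z = {a0} := by
        rw [Finset.erase_insert (by simp [Ne.symm ha0z])]
      rw [h1]
      exact hstrict
  have hadd1 := Finset.sum_add_distrib (s :=
    ((P3.filter (relS z x A)).filter (fun S => z ∈ S)).filter (fun S => ¬ x ∈ S))
    (f := fun S => g1 S) (g := fun S => g1 (insert x (S.erase z)))
  have hadd2 := Finset.sum_add_distrib (s :=
    ((P3.filter (relS z x A)).filter (fun S => z ∈ S)).filter (fun S => ¬ x ∈ S))
    (f := fun S => g2 S) (g := fun S => g2 (insert x (S.erase z)))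
  have hs1 := hsplit g1
  have hs2 := hsplit g2
  have hx1 := hXD g1
  have hx2 := hXD g2
  omega

end Assemble

theorem stmt7 [Fintype α] [DecidableEq α]
    (V : Multiset (List α)) (hV0 : V ≠ 0) (hV : ∀ v ∈ V, IsRanking v)
    (x z : α) (hxz : x ≠ z)
    (hz : geq V (3/4) z x)
    (hx : ∀ y : α, y ≠ x → y ≠ z → geq V (3/4) x y)
    (A B : List α) (hA : A ≠ [])
    (hrank : IsRanking (A ++ z :: x :: B)) :
    d3V (z :: x :: (A ++ B)) V < d3V (A ++ z :: x :: B) V := by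
  have hzx : z ≠ x := hxz.symm
  obtain ⟨hnd, hmem⟩ := hrank
  -- structure facts
  have hperm : (A ++ z :: x :: B).Perm (z :: x :: (A ++ B)) := by
    have h1 : A ++ z :: x :: B = A ++ ([z, x] ++ B) := by simp
    have h2 : z :: x :: (A ++ B) = [z, x] ++ A ++ B := by simp
    rw [h1, h2, ← List.append_assoc]
    exact (List.perm_append_comm).append_right B
  have hrank2 : IsRanking (A ++ z :: x :: B) := ⟨hnd, hmem⟩
  have hrank1 : IsRanking (z :: x :: (A ++ B)) :=
    ⟨hperm.nodup_iff.1 hnd, fun a => hperm.mem_iff.1 (hmem a)⟩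
  rw [List.nodup_append] at hnd
  obtain ⟨hAnd, hnd2, hdisj⟩ := hnd
  have hzA : z ∉ A := fun h => hdisj _ h _ (by simp) rfl
  have hxA : x ∉ A := fun h => hdisj _ h _ (by simp) rfl
  have hBA : ∀ c ∈ B, c ∉ A := fun c hc h => hdisj _ h _ (by simp [hc]) rfl
  have hzB : z ∉ B := by
    simp only [List.nodup_cons, List.mem_cons] at hnd2; tauto
  have hxB : x ∉ B := by
    simp only [List.nodup_cons, List.mem_cons] at hnd2; tauto
  have hmem4 : ∀ c : α, c ∈ A ∨ c = z ∨ c = x ∨ c ∈ B := fun c => by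
    have := hmem c; simp at this; tauto
  -- index formulas
  have idx1z : (z :: x :: (A ++ B)).idxOf z = 0 := by simp
  have idx1x : (z :: x :: (A ++ B)).idxOf x = 1 := by
    rw [List.idxOf_cons_ne _ hzx, List.idxOf_cons_self]
  have idx1A : ∀ c ∈ A, (z :: x :: (A ++ B)).idxOf c = 2 + A.idxOf c := by
    intro c hc
    have hcz : z ≠ c := fun h => hzA (h ▸ hc)
    have hcx : x ≠ c := fun h => hxA (h ▸ hc)
    rw [List.idxOf_cons_ne _ hcz, List.idxOf_cons_ne _ hcx,
      List.idxOf_append_of_mem hc]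
    omega
  have idx1B : ∀ c ∈ B, (z :: x :: (A ++ B)).idxOf c = 2 + A.length + B.idxOf c := by
    intro c hc
    have hcz : z ≠ c := fun h => hzB (h ▸ hc)
    have hcx : x ≠ c := fun h => hxB (h ▸ hc)
    rw [List.idxOf_cons_ne _ hcz, List.idxOf_cons_ne _ hcx,
      List.idxOf_append_of_notMem (hBA c hc)]
    omega
  have idx2z : (A ++ z :: x :: B).idxOf z = A.length := by
    rw [List.idxOf_append_of_notMem hzA, List.idxOf_cons_self]
    omega
  have idx2x : (A ++ z :: x :: B).idxOf x = A.length + 1 := by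
    rw [List.idxOf_append_of_notMem hxA, List.idxOf_cons_ne _ hzx,
      List.idxOf_cons_self]
  have idx2A : ∀ c ∈ A, (A ++ z :: x :: B).idxOf c = A.idxOf c :=
    fun c hc => List.idxOf_append_of_mem hc
  have idx2B : ∀ c ∈ B, (A ++ z :: x :: B).idxOf c = A.length + (2 + B.idxOf c) := by
    intro c hc
    have hcz : z ≠ c := fun h => hzB (h ▸ hc)
    have hcx : x ≠ c := fun h => hxB (h ▸ hc)
    rw [List.idxOf_append_of_notMem (hBA c hc), List.idxOf_cons_ne _ hcz,
      List.idxOf_cons_ne _ hcx]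
    omega
  have idxAlt : ∀ c ∈ A, A.idxOf c < A.length := fun c hc => List.idxOf_lt_length_iff.2 hc
  -- order transfer
  have hord : ∀ c d : α, ¬(c ∈ A ∧ (d = z ∨ d = x)) → ¬(d ∈ A ∧ (c = z ∨ c = x)) →
      ((z :: x :: (A ++ B)).idxOf c ≤ (z :: x :: (A ++ B)).idxOf d ↔
       (A ++ z :: x :: B).idxOf c ≤ (A ++ z :: x :: B).idxOf d) := by
    intro c d h1 h2
    rcases hmem4 c with hc | rfl | rfl | hc <;> rcases hmem4 d with hd | rfl | rfl | hd
    · rw [idx1A c hc, idx1A d hd, idx2A c hc, idx2A d hd]; omega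
    · exact absurd ⟨hc, Or.inl rfl⟩ h1
    · exact absurd ⟨hc, Or.inr rfl⟩ h1
    · have := idxAlt c hc
      rw [idx1A c hc, idx1B d hd, idx2A c hc, idx2B d hd]; omega
    · exact absurd ⟨hd, Or.inl rfl⟩ h2
    · simp
    · rw [idx1z, idx1x, idx2z, idx2x]; omega
    · rw [idx1z, idx1B d hd, idx2z, idx2B d hd]; omega
    · exact absurd ⟨hd, Or.inr rfl⟩ h2
    · rw [idx1x, idx1z, idx2x, idx2z]; omega
    · simp
    · rw [idx1x, idx1B d hd, idx2x, idx2B d hd]; omega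
    · have := idxAlt d hd
      rw [idx1B c hc, idx1A d hd, idx2B c hc, idx2A d hd]; omega
    · rw [idx1B c hc, idx1z, idx2B c hc, idx2z]; omega
    · rw [idx1B c hc, idx1x, idx2B c hc, idx2x]; omega
    · rw [idx1B c hc, idx1B d hd, idx2B c hc, idx2B d hd]; omega
  -- counting hypotheses
  have hn : 0 < Multiset.card V := Multiset.card_pos.2 hV0
  have hm0 : 4 * V.countP (fun v => ¬ v.idxOf z < v.idxOf x) ≤ Multiset.card V :=
    geq_to_count V hz
  have hmy : ∀ y : α, y ≠ x → y ≠ z →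
      4 * V.countP (fun v => ¬ v.idxOf x < v.idxOf y) ≤ Multiset.card V :=
    fun y h1 h2 => geq_to_count V (hx y h1 h2)
  -- istop facts
  have histop1z : ∀ S : Finset α, z ∈ S → istop (z :: x :: (A ++ B)) S z :=
    fun S hSz => ⟨hSz, fun c _ => by rw [idx1z]; omega⟩
  have histop1x : ∀ S : Finset α, x ∈ S → z ∉ S → istop (z :: x :: (A ++ B)) S x := by
    intro S hSx hSz
    refine ⟨hSx, fun c hc => ?_⟩
    rcases hmem4 c with h | rfl | rfl | h
    · rw [idx1x, idx1A c h]; omega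
    · exact absurd hc hSz
    · omega
    · rw [idx1x, idx1B c h]; omega
  -- main assembly
  rw [d3V_eq, d3V_eq]
  refine assemble z x A hzx hzA hxA _ _ ?hrest ?hT ?hD (A.head hA) (List.head_mem hA) ?hstrict
  case hrest =>
    intro S _ hnr
    refine Multiset.countP_congr rfl (fun v _ => propext
      (Qp_order_congr (fun a ha c hc => hord a c ?_ ?_)))
    · rintro ⟨haA, hczx⟩
      refine hnr ⟨?_, a, ha, haA⟩
      rcases hczx with rfl | rfl
      · exact Or.inl hc
      · exact Or.inr hc
    · rintro ⟨hcA, hazx⟩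
      refine hnr ⟨?_, c, hc, hcA⟩
      rcases hazx with rfl | rfl
      · exact Or.inl ha
      · exact Or.inr ha
  case hT =>
    intro S hcard hzS hxS hw
    obtain ⟨a, haS, haA⟩ := hw
    have hax : a ≠ x := fun h => hxA (h ▸ haA)
    have haz : a ≠ z := fun h => hzA (h ▸ haA)
    have hsub : ({z, x, a} : Finset α) ⊆ S := by
      intro c hc
      simp only [Finset.mem_insert, Finset.mem_singleton] at hc
      rcases hc with rfl | rfl | rfl <;> assumption
    have hc3 : ({z, x, a} : Finset α).card = 3 :=
      Finset.card_eq_three.2 ⟨z, x, a, hzx, Ne.symm haz, Ne.symm hax, rfl⟩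
    have hSeq : S = {z, x, a} :=
      (Finset.eq_of_subset_of_card_le hsub (by rw [hc3]; exact hcard)).symm
    rw [hSeq]
    have ht2 : istop (A ++ z :: x :: B) {z, x, a} a := by
      refine ⟨by simp, fun c hc => ?_⟩
      have h2a := idx2A a haA
      have hia := idxAlt a haA
      simp only [Finset.mem_insert, Finset.mem_singleton] at hc
      rcases hc with rfl | rfl | rfl
      · rw [h2a, idx2z]; omega
      · rw [h2a, idx2x]; omega
      · omega
    rw [gg_eq V hV hrank1 (histop1z {z, x, a} (by simp)), gg_eq V hV hrank2 ht2]
    exact keyT V hV x z a hax haz hm0 (hmy a hax haz)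
  case hD =>
    intro S hcard hzS hxS hw
    obtain ⟨a, haS, haA⟩ := hw
    have hax : a ≠ x := fun h => hxA (h ▸ haA)
    have haz : a ≠ z := fun h => hzA (h ▸ haA)
    have haS0 : a ∈ S.erase z := Finset.mem_erase.2 ⟨haz, haS⟩
    have hxS0 : x ∉ S.erase z := fun h => hxS (Finset.mem_of_mem_erase h)
    have hzS0 : z ∉ S.erase z := Finset.notMem_erase z S
    have hcard0 : (S.erase z).card = S.card - 1 := Finset.card_erase_of_mem hzS
    have hposS : 0 < S.card := Finset.card_pos.2 ⟨z, hzS⟩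
    have hpos : 0 < (S.erase z).card := Finset.card_pos.2 ⟨a, haS0⟩
    have hSeq : S = insert z (S.erase z) := (Finset.insert_erase hzS).symm
    have h12 : (S.erase z).card = 1 ∨ (S.erase z).card = 2 := by omega
    rcases h12 with h1 | h2
    · obtain ⟨c, hc⟩ := Finset.card_eq_one.1 h1
      have hac : a = c := by rw [hc] at haS0; simpa using haS0
      subst hac
      have hS2 : S = {z, a} := by rw [hSeq, hc]
      have hphi : insert x (S.erase z) = {x, a} := by rw [hc]
      rw [hphi, hS2]
      have ht2 : istop (A ++ z :: x :: B) {z, a} a := by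
        refine ⟨by simp, fun c hc => ?_⟩
        have h2a := idx2A a haA
        have hia := idxAlt a haA
        simp only [Finset.mem_insert, Finset.mem_singleton] at hc
        rcases hc with rfl | rfl
        · rw [h2a, idx2z]; omega
        · omega
      have ht2' : istop (A ++ z :: x :: B) {x, a} a := by
        refine ⟨by simp, fun c hc => ?_⟩
        have h2a := idx2A a haA
        have hia := idxAlt a haA
        simp only [Finset.mem_insert, Finset.mem_singleton] at hc
        rcases hc with rfl | rfl
        · rw [h2a, idx2x]; omega
        · omega
      rw [gg_eq V hV hrank1 (histop1z {z, a} (by simp)),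
        gg_eq V hV hrank1 (histop1x {x, a} (by simp) (by
          simp only [Finset.mem_insert, Finset.mem_singleton]
          push_neg
          exact ⟨hzx, Ne.symm haz⟩)),
        gg_eq V hV hrank2 ht2, gg_eq V hV hrank2 ht2']
      exact le_of_lt (key2 V hV hn x z a hax haz hm0 (hmy a hax haz))
    · obtain ⟨c, d, hcd, hS0eq⟩ := Finset.card_eq_two.1 h2
      have main2 : ∀ e f : α, e ≠ f → S.erase z = {e, f} →
          (A ++ z :: x :: B).idxOf e ≤ (A ++ z :: x :: B).idxOf f →
          V.countP (fun v => Qp (z :: x :: (A ++ B)) v S)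
            + V.countP (fun v => Qp (z :: x :: (A ++ B)) v (insert x (S.erase z)))
          ≤ V.countP (fun v => Qp (A ++ z :: x :: B) v S)
            + V.countP (fun v => Qp (A ++ z :: x :: B) v (insert x (S.erase z))) := by
        intro e f hef hS0eq hle
        have heS0 : e ∈ S.erase z := by rw [hS0eq]; simp
        have hfS0 : f ∈ S.erase z := by rw [hS0eq]; simp
        have hex : e ≠ x := fun h => hxS0 (h ▸ heS0)
        have hez : e ≠ z := fun h => hzS0 (h ▸ heS0)
        have hfx : f ≠ x := fun h => hxS0 (h ▸ hfS0)
        have hfz : f ≠ z := fun h => hzS0 (h ▸ hfS0)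
        have haef : a = e ∨ a = f := by
          have h := haS0
          rw [hS0eq] at h
          simpa using h
        have hIe : (A ++ z :: x :: B).idxOf e < A.length := by
          have h2a := idx2A a haA
          have hia := idxAlt a haA
          rcases haef with rfl | rfl
          · omega
          · omega
        have hS3 : S = {z, e, f} := by rw [hSeq, hS0eq]
        have hphi : insert x (S.erase z) = {x, e, f} := by rw [hS0eq]
        rw [hphi, hS3]
        have ht2 : istop (A ++ z :: x :: B) {z, e, f} e := by
          refine ⟨by simp, fun c hc => ?_⟩
          simp only [Finset.mem_insert, Finset.mem_singleton] at hc
          rcases hc with rfl | rfl | rfl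
          · rw [idx2z]; omega
          · omega
          · omega
        have ht2' : istop (A ++ z :: x :: B) {x, e, f} e := by
          refine ⟨by simp, fun c hc => ?_⟩
          simp only [Finset.mem_insert, Finset.mem_singleton] at hc
          rcases hc with rfl | rfl | rfl
          · rw [idx2x]; omega
          · omega
          · omega
        rw [gg_eq V hV hrank1 (histop1z {z, e, f} (by simp)),
          gg_eq V hV hrank1 (histop1x {x, e, f} (by simp) (by
            simp only [Finset.mem_insert, Finset.mem_singleton]
            push_neg
            exact ⟨hzx, Ne.symm hez, Ne.symm hfz⟩)),
          gg_eq V hV hrank2 ht2, gg_eq V hV hrank2 ht2']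
        exact key3 V hV x z e f hex hez hfx hfz hm0 (hmy e hex hez) (hmy f hfx hfz)
      rcases le_total ((A ++ z :: x :: B).idxOf c) ((A ++ z :: x :: B).idxOf d)
        with h | h
      · exact main2 c d hcd hS0eq h
      · exact main2 d c hcd.symm (by rw [hS0eq, Finset.pair_comm]) h
  case hstrict =>
    have ha0A : A.head hA ∈ A := List.head_mem hA
    have hax : A.head hA ≠ x := fun h => hxA (h ▸ ha0A)
    have haz : A.head hA ≠ z := fun h => hzA (h ▸ ha0A)
    have ht2 : istop (A ++ z :: x :: B) {z, A.head hA} (A.head hA) := by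
      refine ⟨by simp, fun c hc => ?_⟩
      have h2a := idx2A _ ha0A
      have hia := idxAlt _ ha0A
      simp only [Finset.mem_insert, Finset.mem_singleton] at hc
      rcases hc with rfl | rfl
      · rw [h2a, idx2z]; omega
      · omega
    have ht2' : istop (A ++ z :: x :: B) {x, A.head hA} (A.head hA) := by
      refine ⟨by simp, fun c hc => ?_⟩
      have h2a := idx2A _ ha0A
      have hia := idxAlt _ ha0A
      simp only [Finset.mem_insert, Finset.mem_singleton] at hc
      rcases hc with rfl | rfl
      · rw [h2a, idx2x]; omega
      · omega
    rw [gg_eq V hV hrank1 (histop1z {z, A.head hA} (by simp)),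
      gg_eq V hV hrank1 (histop1x {x, A.head hA} (by simp) (by
        simp only [Finset.mem_insert, Finset.mem_singleton]
        push_neg
        exact ⟨hzx, Ne.symm haz⟩)),
      gg_eq V hV hrank2 ht2, gg_eq V hV hrank2 ht2']
    exact key2 V hV hn x z (A.head hA) hax haz hm0 (hmy _ hax haz)
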